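/- Let a ≠ 0 and let x : I → ℝ be a positive C² function satisfying x·x'' = −a·(1 − (x')²) on an open interval I (the profile equation for κ₁ = a κ₂). Then there exists a constant m ∈ ℝ such that (x'(s))² = 1 + m·x(s)^{2a} for all s ∈ I. -/

import Mathlib

open Real Set

/-- first integral of the profile equation x·x'' = -a(1 - x'²):
there is a constant m with (x')² = 1 + m·x^(2a). -/
theorem first_integral (a : ℝ) (ha : a ≠ 0) (α β : ℝ) (hαβ : α < β)
    (x x' x'' : ℝ → ℝ)
    (hx_pos : ∀ s ∈ Ioo α β, 0 < x s)
    (hx : ∀ s ∈ Ioo α β, HasDerivAt x (x' s) s)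
    (hx' : ∀ s ∈ Ioo α β, HasDerivAt x' (x'' s) s)
    (heq : ∀ s ∈ Ioo α β, x s * x'' s = -a * (1 - (x' s) ^ 2)) :
    ∃ m : ℝ, ∀ s ∈ Ioo α β, (x' s) ^ 2 = 1 + m * x s ^ (2 * a : ℝ) := by
  set c : ℝ := -(2 * a) with hc
  set F : ℝ → ℝ := fun s => ((x' s) ^ 2 - 1) * x s ^ c with hF
  have hFd : ∀ s ∈ Ioo α β, HasDerivAt F 0 s := by
    intro s hs
    have hxs : 0 < x s := hx_pos s hs
    have h1 : HasDerivAt (fun s => (x' s) ^ 2 - 1)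
        ((2 : ℕ) * x' s ^ (2 - 1) * x'' s) s := ((hx' s hs).pow 2).sub_const 1
    have h2 : HasDerivAt (fun s => x s ^ c) (x' s * c * x s ^ (c - 1)) s :=
      (hx s hs).rpow_const (Or.inl hxs.ne')
    have h3 := h1.mul h2
    refine h3.congr_deriv (Eq.symm ?_)
    have hsub : x s ^ (c - 1) = x s ^ c / x s := by
      rw [Real.rpow_sub hxs, Real.rpow_one]
    have he := heq s hs
    rw [hsub, hc]
    push_cast
    norm_num
    field_simp
    linear_combination (-2 * x' s * x s ^ (-(2*a))) * he
  have hmid : (α + β) / 2 ∈ Ioo α β := ⟨by linarith, by linarith⟩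
  refine ⟨F ((α + β) / 2), fun s hs => ?_⟩
  have hconst : F s = F ((α + β) / 2) := by
    apply (convex_Ioo α β).is_const_of_fderivWithin_eq_zero
      (f := F) (fun t ht => ((hFd t ht).differentiableAt).differentiableWithinAt)
      ?_ hs hmid
    intro t ht
    rw [fderivWithin_eq_fderiv ((isOpen_Ioo.uniqueDiffOn) t ht)
      ((hFd t ht).differentiableAt), (hFd t ht).hasFDerivAt.fderiv]
    ext y
    simp
  have hxs : 0 < x s := hx_pos s hs
  have hne : x s ^ (2 * a : ℝ) ≠ 0 := (Real.rpow_pos_of_pos hxs _).ne'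
  have key : ((x' s) ^ 2 - 1) * x s ^ c = F ((α + β) / 2) := hconst
  have hinv : x s ^ c * x s ^ (2 * a : ℝ) = 1 := by
    rw [← Real.rpow_add hxs, hc]; simp
  linear_combination x s ^ (2*a : ℝ) * key - (x' s ^ 2 - 1) * hinv
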